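/- A symmetric matrix ω with entries in ℕ ∪ {∞} indexed by a finite PCS Σ is a 2-ranking if and only if there exists a ranking κ on the Hamming cube H with ω_{ab} = κ(⟨{a,b}⟩) for all a,b. Moreover, when ω is a 2-ranking, the function κ̂(u) := max_{a,b ∈ u} ω_{ab} (extended to sets by minimization) is the unique minimal ranking agreeing with ω: κ̂ agrees with ω, and κ̂ ≤ κ pointwise for every ranking κ agreeing with ω. -/
import Mathlib


universe u v

structure PCS (α : Type*) where
  star : α → α
  zero : α
  star_star : ∀ a, star (star a) = a
  star_ne_self : ∀ a, star a ≠ a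

variable {α : Type*}

/-- A pointed complemented relation (PCR) over the PCS `P`. -/
def IsPCR (P : PCS α) (G : Set (α × α)) : Prop :=
  (∀ a, (P.zero, a) ∈ G) ∧ ∀ a b, (a, b) ∈ G ↔ (P.star b, P.star a) ∈ G

/-- `a ≤_G b`: the reflexive-transitive closure of the relation `G`. -/
def pcrLe (G : Set (α × α)) (a b : α) : Prop :=
  Relation.ReflTransGen (fun x y => (x, y) ∈ G) a b

/-- A set `S` is `G`-coherent if no `a, b ∈ S` satisfy `a ≤_G b*`. -/
def Coherent (P : PCS α) (G : Set (α × α)) (S : Set α) : Prop :=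
  ∀ a ∈ S, ∀ b ∈ S, ¬ pcrLe G a (P.star b)

/-- Forward closure `↑S = {b | ∃ a ∈ S, a ≤_G b}`. -/
def upClosure (G : Set (α × α)) (S : Set α) : Set α :=
  {b | ∃ a ∈ S, pcrLe G a b}

/-- Maximal `G`-coherent subsets; the members of the dual space `G°`. -/
def MaxCoherent (P : PCS α) (G : Set (α × α)) (S : Set α) : Prop :=
  Coherent P G S ∧ ∀ T, Coherent P G T → S ⊆ T → S = T

/-- `G` is non-degenerate: no `a` satisfies both `a ≤_G a*` and `a* ≤_G a`. -/
def Nondegenerate (P : PCS α) (G : Set (α × α)) : Prop :=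
  ∀ a, ¬ (pcrLe G a (P.star a) ∧ pcrLe G (P.star a) a)

/-- A complete `*`-selection: exactly one of `a`, `a*` belongs to `S`, for each `a`. -/
def CompleteSel (P : PCS α) (S : Set α) : Prop :=
  ∀ a, Xor' (a ∈ S) (P.star a ∈ S)

/-- The half-space `⟨S;G⟩ = {u ∈ G° : S ⊆ u}`. -/
def halfspace (P : PCS α) (G : Set (α × α)) (S : Set α) : Set (Set α) :=
  {u | MaxCoherent P G u ∧ S ⊆ u}

/-- Coherent projection `coh_G(T) = ↑T ∖ (↑T)*`. -/
def cohProj (P : PCS α) (G : Set (α × α)) (T : Set α) : Set α :=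
  upClosure G T \ (P.star '' upClosure G T)

/-- Morphisms of PCRs. -/
def IsPCRHom {β : Type*} (P : PCS α) (Q : PCS β) (G : Set (α × α)) (H : Set (β × β))
    (f : α → β) : Prop :=
  f P.zero = Q.zero ∧ (∀ a, f (P.star a) = Q.star (f a)) ∧
    ∀ a b, (a, b) ∈ G → pcrLe H (f a) (f b)

/-- A poc set: a PCR whose induced relation `≤_G` is antisymmetric and whose only
negligible element is `0`. -/
def IsPocSet (P : PCS α) (G : Set (α × α)) : Prop :=
  IsPCR P G ∧ (∀ a b, pcrLe G a b → pcrLe G b a → a = b) ∧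
    ∀ a, pcrLe G a (P.star a) → a = P.zero

/-- The Hamming cube: complete `*`-selections containing `1 = 0*`. -/
def Hcube (P : PCS α) : Set (Set α) :=
  {u | CompleteSel P u ∧ P.star P.zero ∈ u}

/-- `⟨S⟩ = {u ∈ H : S ⊆ u}`. -/
def halfCube (P : PCS α) (S : Set α) : Set (Set α) :=
  {u | u ∈ Hcube P ∧ S ⊆ u}

/-- A ranking on the Hamming cube. -/
def IsRanking (P : PCS α) (κ : Set (Set α) → ℕ∞) : Prop :=
  (∀ F, F ⊆ Hcube P → κ F = ⨅ u ∈ F, κ {u}) ∧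
    (∃ u ∈ Hcube P, κ {u} < ⊤) ∧ κ ∅ = ⊤

/-- A 2-ranking on the PCS `P`. -/
def Is2Ranking (P : PCS α) (ω : α → α → ℕ∞) : Prop :=
  (∀ a b, ω a b = ω b a) ∧
  (∀ a, ω P.zero a = ⊤) ∧
  (∀ a, ω a (P.star a) = ⊤) ∧
  (∀ a b, min (ω a a) (ω (P.star a) (P.star a)) = min (ω b b) (ω (P.star b) (P.star b))) ∧
  (∀ a, min (ω a a) (ω (P.star a) (P.star a)) < ⊤) ∧
  (∀ a b, ω a a = min (ω a b) (ω a (P.star b))) ∧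
  (∀ a b c, min (ω a (P.star b)) (ω b (P.star c)) ≤ ω a (P.star c))


namespace Stmt15Aux

lemma pstar_inj (P : PCS α) {a b : α} (h : P.star a = P.star b) : a = b := by
  rw [← P.star_star a, h, P.star_star]

lemma extend_sel [Finite α] (P : PCS α) (ω : α → α → ℕ∞)
    (hsym : ∀ a b, ω a b = ω b a)
    (hdiag : ∀ a b, ω a a ≤ ω a b)
    (htri : ∀ a b c, min (ω a (P.star b)) (ω b (P.star c)) ≤ ω a (P.star c))
    (w : ℕ∞) :
    ∀ n (S : Set α), {c | c ∉ S ∧ P.star c ∉ S}.ncard ≤ n → S.Nonempty →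
      (∀ c, ¬(c ∈ S ∧ P.star c ∈ S)) → (∀ x ∈ S, ∀ y ∈ S, ω x y ≤ w) →
      ∃ u, S ⊆ u ∧ CompleteSel P u ∧ ∀ x ∈ u, ∀ y ∈ u, ω x y ≤ w := by
  intro n
  induction n with
  | zero =>
    intro S hcard hne hcons hw
    have hM : {c | c ∉ S ∧ P.star c ∉ S} = ∅ := by
      rw [← Set.ncard_eq_zero (Set.toFinite _)]; omega
    refine ⟨S, le_refl _, ?_, hw⟩
    intro a
    have ha : a ∈ S ∨ P.star a ∈ S := by
      by_contra h
      push_neg at h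
      have : a ∈ ({c | c ∉ S ∧ P.star c ∉ S} : Set α) := ⟨h.1, h.2⟩
      rw [hM] at this; exact this
    rcases ha with h | h
    · exact Or.inl ⟨h, fun h' => hcons a ⟨h, h'⟩⟩
    · exact Or.inr ⟨h, fun h' => hcons a ⟨h', h⟩⟩
  | succ n ih =>
    intro S hcard hne hcons hw
    by_cases hM : {c | c ∉ S ∧ P.star c ∉ S} = ∅
    · exact ih S (by rw [hM]; simp) hne hcons hw
    · obtain ⟨c, hc⟩ := Set.nonempty_iff_ne_empty.mpr hM
      have key : (∀ x ∈ S, ω c x ≤ w) ∨ (∀ x ∈ S, ω (P.star c) x ≤ w) := by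
        by_contra h
        push_neg at h
        obtain ⟨⟨x, hx, hxc⟩, ⟨y, hy, hyc⟩⟩ := h
        have t := htri x (P.star c) (P.star y)
        rw [P.star_star, P.star_star] at t
        have : w < min (ω x c) (ω (P.star c) y) :=
          lt_min (by rw [hsym]; exact hxc) hyc
        exact absurd (t.trans (hw x hx y hy)) (not_le.mpr (this.trans_le (le_refl _)))
      obtain ⟨c', hc1, hc2, hcw⟩ :
          ∃ c', (c' = c ∨ c' = P.star c) ∧ (c' ∉ S ∧ P.star c' ∉ S) ∧ ∀ x ∈ S, ω c' x ≤ w := by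
        rcases key with h | h
        · exact ⟨c, Or.inl rfl, hc, h⟩
        · exact ⟨P.star c, Or.inr rfl, ⟨hc.2, by rw [P.star_star]; exact hc.1⟩, h⟩
      obtain ⟨x₀, hx₀⟩ := hne
      have hS' : ∀ x ∈ insert c' S, ∀ y ∈ insert c' S, ω x y ≤ w := by
        intro x hx y hy
        rcases hx with rfl | hx <;> rcases hy with rfl | hy
        · exact (hdiag _ x₀).trans (hcw x₀ hx₀)
        · exact hcw y hy
        · rw [hsym]; exact hcw x hx
        · exact hw x hx y hy
      have hcons' : ∀ d, ¬(d ∈ insert c' S ∧ P.star d ∈ insert c' S) := by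
        rintro d ⟨hd1, hd2⟩
        rcases hd1 with rfl | hd1 <;> rcases hd2 with hd2 | hd2
        · exact P.star_ne_self d hd2
        · exact hc2.2 hd2
        · have : d = P.star c' := by rw [← hd2, P.star_star]
          subst this
          rcases hc1 with rfl | rfl
          · exact hc.2 hd1
          · rw [P.star_star] at hd1; exact hc.1 hd1
        · exact hcons d ⟨hd1, hd2⟩
      have hsub : {d | d ∉ insert c' S ∧ P.star d ∉ insert c' S} ⊂ {c | c ∉ S ∧ P.star c ∉ S} := by
        constructor
        · rintro d ⟨hd1, hd2⟩
          exact ⟨fun h => hd1 (Set.mem_insert_of_mem _ h),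
                 fun h => hd2 (Set.mem_insert_of_mem _ h)⟩
        · intro hsub'
          have hcmem : c ∈ {d | d ∉ insert c' S ∧ P.star d ∉ insert c' S} := hsub' hc
          rcases hc1 with rfl | rfl
          · exact hcmem.1 (Set.mem_insert _ _)
          · exact hcmem.2 (Set.mem_insert _ _)
      have hcard' : {d | d ∉ insert c' S ∧ P.star d ∉ insert c' S}.ncard ≤ n := by
        have := Set.ncard_lt_ncard hsub (Set.toFinite _)
        omega
      obtain ⟨u, hu1, hu2, hu3⟩ := ih (insert c' S) hcard' ⟨c', Set.mem_insert _ _⟩ hcons' hS'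
      exact ⟨u, (Set.subset_insert _ _).trans hu1, hu2, hu3⟩

section derived
variable {P : PCS α} {ω : α → α → ℕ∞} (h2 : Is2Ranking P ω)
include h2

lemma hdiag : ∀ a b, ω a a ≤ ω a b := fun a b => by
  rw [h2.2.2.2.2.2.1 a b]; exact min_le_left _ _

lemma hone : ∀ a, ω a (P.star P.zero) = ω a a := fun a => by
  have := h2.2.2.2.2.2.1 a P.zero
  rw [h2.1 a P.zero, h2.2.1 a] at this
  simpa using this.symm

lemma h11 : ∀ a, ω (P.star P.zero) (P.star P.zero) ≤ ω a a := fun a =>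
  calc ω (P.star P.zero) (P.star P.zero) ≤ ω (P.star P.zero) a := hdiag h2 _ _
    _ = ω a a := by rw [h2.1, hone h2]

omit h2 in
lemma construct [Finite α] (h2 : Is2Ranking P ω) {a b : α} (hab : ω a b < ⊤) :
    ∃ u, CompleteSel P u ∧ P.star P.zero ∈ u ∧ a ∈ u ∧ b ∈ u ∧
      ∀ x ∈ u, ∀ y ∈ u, ω x y ≤ ω a b := by
  obtain ⟨hs, h0, hst, hconst, hfin, hsplit, htri⟩ := h2
  have h2 : Is2Ranking P ω := ⟨hs, h0, hst, hconst, hfin, hsplit, htri⟩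
  have ha0 : a ≠ P.zero := by rintro rfl; rw [h0 b] at hab; exact absurd hab (lt_irrefl _)
  have hb0 : b ≠ P.zero := by rintro rfl; rw [hs, h0 a] at hab; exact absurd hab (lt_irrefl _)
  have hbas : b ≠ P.star a := by rintro rfl; rw [hst a] at hab; exact absurd hab (lt_irrefl _)
  have haas : a ≠ P.star b := by
    rintro rfl; rw [hs, hst b] at hab; exact absurd hab (lt_irrefl _)
  set one := P.star P.zero with hone_def
  set S : Set α := {a, b, one} with hS
  have hmem : ∀ x ∈ S, x = a ∨ x = b ∨ x = one := by
    intro x hx; simpa [hS] using hx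
  have hbnd : ∀ x ∈ S, ∀ y ∈ S, ω x y ≤ ω a b := by
    have e1 : ω a one = ω a a := hone h2 a
    have e2 : ω b one = ω b b := hone h2 b
    have d1 : ω a a ≤ ω a b := hdiag h2 a b
    have d2 : ω b b ≤ ω a b := by calc ω b b ≤ ω b a := hdiag h2 b a
                                    _ = ω a b := hs b a
    have d3 : ω one one ≤ ω a b := (h11 h2 a).trans d1
    intro x hx y hy
    rcases hmem x hx with rfl | rfl | rfl <;> rcases hmem y hy with rfl | rfl | rfl
    · exact d1
    · exact le_refl _
    · rw [e1]; exact d1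
    · rw [hs]
    · exact d2
    · rw [e2]; exact d2
    · rw [hs, e1]; exact d1
    · rw [hs, e2]; exact d2
    · exact d3
  have hcons : ∀ c, ¬(c ∈ S ∧ P.star c ∈ S) := by
    rintro c ⟨hc1, hc2⟩
    rcases hmem c hc1 with rfl | rfl | rfl <;> rcases hmem _ hc2 with h | h | h
    · exact P.star_ne_self c h
    · exact hbas h.symm
    · exact ha0 (pstar_inj P h)
    · exact haas h.symm
    · exact P.star_ne_self c h
    · exact hb0 (pstar_inj P h)
    · exact ha0 (by rw [← h, hone_def, P.star_star])
    · exact hb0 (by rw [← h, hone_def, P.star_star])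
    · exact P.star_ne_self one h
  obtain ⟨u, hu1, hu2, hu3⟩ := extend_sel P ω hs (hdiag h2) htri (ω a b)
    ({c | c ∉ S ∧ P.star c ∉ S}.ncard) S (le_refl _) ⟨a, by simp [hS]⟩ hcons hbnd
  exact ⟨u, hu2, hu1 (by simp [hS]), hu1 (by simp [hS]), hu1 (by simp [hS]), hu3⟩

lemma agree [Finite α] : ∀ a b,
    (⨅ u ∈ halfCube P {a, b}, ⨆ x ∈ u, ⨆ y ∈ u, ω x y) = ω a b := by
  intro a b
  apply le_antisymm
  · rcases lt_or_eq_of_le (le_top : ω a b ≤ ⊤) with hlt | htop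
    · obtain ⟨u, hu1, hu2, hu3, hu4, hu5⟩ := construct h2 hlt
      refine iInf₂_le_of_le u ⟨⟨hu1, hu2⟩, ?_⟩ ?_
      · intro x hx; rcases hx with rfl | hx
        · exact hu3
        · simpa using (by simpa using hx : x = b) ▸ hu4
      · exact iSup₂_le fun x hx => iSup₂_le fun y hy => hu5 x hx y hy
    · rw [htop]; exact le_top
  · refine le_iInf₂ fun u hu => ?_
    exact le_iSup₂_of_le a (hu.2 (Set.mem_insert _ _))
      (le_iSup₂_of_le b (hu.2 (by simp)) le_rfl)

lemma ranking_hat [Finite α] :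
    IsRanking P (fun F => ⨅ u ∈ F, ⨆ a ∈ u, ⨆ b ∈ u, ω a b) := by
  refine ⟨fun F hF => ?_, ?_, by simp⟩
  · simp
  · have h1 : ω (P.star P.zero) (P.star P.zero) < ⊤ := by
      have := h2.2.2.2.2.1 P.zero
      rw [h2.2.1 P.zero] at this
      simpa using this
    obtain ⟨u, hu1, hu2, _, _, hu5⟩ := construct h2 h1
    refine ⟨u, ⟨hu1, hu2⟩, ?_⟩
    show (⨅ v ∈ ({u} : Set (Set α)), ⨆ a ∈ v, ⨆ b ∈ v, ω a b) < ⊤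
    have : (⨅ v ∈ ({u} : Set (Set α)), ⨆ a ∈ v, ⨆ b ∈ v, ω a b)
        = ⨆ a ∈ u, ⨆ b ∈ u, ω a b := by simp
    rw [this]
    exact lt_of_le_of_lt (iSup₂_le fun x hx => iSup₂_le fun y hy => hu5 x hx y hy) h1

end derived

lemma backward (P : PCS α) (ω : α → α → ℕ∞) (hsym : ∀ a b, ω a b = ω b a)
    (κ : Set (Set α) → ℕ∞) (hκ : IsRanking P κ)
    (hk : ∀ a b, κ (halfCube P {a, b}) = ω a b) : Is2Ranking P ω := by
  obtain ⟨hinf, ⟨u₀, hu₀, hu₀fin⟩, hempty⟩ := hκ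
  have hhc : ∀ S, halfCube P S ⊆ Hcube P := fun S u hu => hu.1
  have hev : ∀ S, κ (halfCube P S) = ⨅ u ∈ halfCube P S, κ {u} := fun S => hinf _ (hhc S)
  have hxor : ∀ u ∈ Hcube P, ∀ c, Xor' (c ∈ u) (P.star c ∈ u) := fun u hu => hu.1
  have hnot0 : ∀ u ∈ Hcube P, P.zero ∉ u := by
    intro u hu h
    rcases hxor u hu P.zero with ⟨h1, h2⟩ | ⟨h1, h2⟩
    · exact h2 hu.2
    · exact h2 h
  -- κ of a union of half-cubes
  have hunion : ∀ s t : Set (Set α), s ⊆ Hcube P → t ⊆ Hcube P →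
      κ (s ∪ t) = min (κ s) (κ t) := by
    intro s t hs ht
    rw [hinf _ (Set.union_subset hs ht), hinf _ hs, hinf _ ht, iInf_union]
  -- covering
  have hcover : ∀ (S : Set α) (x : α),
      halfCube P (insert x S) ∪ halfCube P (insert (P.star x) S) = halfCube P S := by
    intro S x
    apply Set.Subset.antisymm
    · rintro u (hu | hu)
      · exact ⟨hu.1, fun y hy => hu.2 (Set.mem_insert_of_mem _ hy)⟩
      · exact ⟨hu.1, fun y hy => hu.2 (Set.mem_insert_of_mem _ hy)⟩
    · intro u hu
      rcases hxor u hu.1 x with ⟨h1, _⟩ | ⟨h1, _⟩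
      · exact Or.inl ⟨hu.1, Set.insert_subset h1 hu.2⟩
      · exact Or.inr ⟨hu.1, Set.insert_subset h1 hu.2⟩
  have hsingle : ∀ a : α, halfCube P ({a, a} : Set α) = halfCube P {a} := by
    intro a; simp
  have hfull : halfCube P (∅ : Set α) = Hcube P := by
    ext u; simp [halfCube]
  -- axiom 4 precursor: min (ω a a) (ω a* a*) = κ (Hcube P)
  have hc4 : ∀ a : α, min (ω a a) (ω (P.star a) (P.star a)) = κ (Hcube P) := by
    intro a
    rw [← hk a a, ← hk (P.star a) (P.star a), hsingle, hsingle,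
        ← hunion _ _ (hhc _) (hhc _)]
    congr 1
    have h := hcover ∅ a
    rw [hfull] at h
    simpa using h
  refine ⟨hsym, ?_, ?_, ?_, ?_, ?_, ?_⟩
  · -- ω 0 a = ⊤
    intro a
    rw [← hk]
    have : halfCube P ({P.zero, a} : Set α) = ∅ := by
      ext u
      simp only [halfCube, Set.mem_setOf_eq, Set.mem_empty_iff_false, iff_false, not_and]
      intro hu hsub
      exact hnot0 u hu (hsub (Set.mem_insert _ _))
    rw [this, hempty]
  · -- ω a a* = ⊤
    intro a
    rw [← hk]
    have : halfCube P ({a, P.star a} : Set α) = ∅ := by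
      ext u
      simp only [halfCube, Set.mem_setOf_eq, Set.mem_empty_iff_false, iff_false, not_and]
      intro hu hsub
      rcases hxor u hu a with ⟨h1, h2⟩ | ⟨h1, h2⟩
      · exact h2 (hsub (by simp))
      · exact h2 (hsub (Set.mem_insert _ _))
    rw [this, hempty]
  · intro a b; rw [hc4 a, hc4 b]
  · intro a
    rw [hc4 a, hinf _ (le_refl _)]
    exact lt_of_le_of_lt (iInf₂_le u₀ hu₀) hu₀fin
  · -- ω a a = min (ω a b) (ω a b*)
    intro a b
    rw [← hk a a, ← hk a b, ← hk a (P.star b), hsingle, ← hunion _ _ (hhc _) (hhc _)]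
    congr 1
    have := hcover {a} b
    rw [Set.pair_comm a b, Set.pair_comm a (P.star b)]
    exact this.symm
  · -- triangle
    intro a b c
    rw [← hk a (P.star b), ← hk b (P.star c), ← hk a (P.star c), hev {a, P.star c}]
    refine le_iInf₂ fun u hu => ?_
    rcases hxor u hu.1 b with ⟨h1, _⟩ | ⟨h1, _⟩
    · refine min_le_of_right_le ?_
      rw [hev]
      exact iInf₂_le u ⟨hu.1, Set.insert_subset h1 (by
        intro y hy; simp only [Set.mem_singleton_iff] at hy; subst hy
        exact hu.2 (by simp))⟩
    · refine min_le_of_left_le ?_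
      rw [hev]
      exact iInf₂_le u ⟨hu.1, Set.insert_subset (hu.2 (Set.mem_insert _ _)) (by
        intro y hy; simp only [Set.mem_singleton_iff] at hy; subst hy; exact h1)⟩

end Stmt15Aux

open Stmt15Aux in
/-- A symmetric matrix is a 2-ranking iff it agrees with some ranking; moreover the
completion `κ̂(u) = max_{a,b ∈ u} ω_{ab}` (extended by minimization) is the minimal
ranking agreeing with it. -/
theorem stmt15 [Finite α] (P : PCS α) (ω : α → α → ℕ∞)
    (hsym : ∀ a b, ω a b = ω b a) :
    (Is2Ranking P ω ↔
      ∃ κ : Set (Set α) → ℕ∞, IsRanking P κ ∧ ∀ a b, κ (halfCube P {a, b}) = ω a b) ∧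
    (Is2Ranking P ω →
      (IsRanking P (fun F => ⨅ u ∈ F, ⨆ a ∈ u, ⨆ b ∈ u, ω a b) ∧
       (∀ a b, (⨅ u ∈ halfCube P {a, b}, ⨆ x ∈ u, ⨆ y ∈ u, ω x y) = ω a b) ∧
       ∀ κ : Set (Set α) → ℕ∞, IsRanking P κ →
         (∀ a b, κ (halfCube P {a, b}) = ω a b) →
         ∀ F, F ⊆ Hcube P → (⨅ u ∈ F, ⨆ a ∈ u, ⨆ b ∈ u, ω a b) ≤ κ F)) := by
  constructor
  · constructor
    · intro h2
      exact ⟨_, ranking_hat h2, fun a b => agree h2 a b⟩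
    · rintro ⟨κ, hκ, hk⟩
      exact backward P ω hsym κ hκ hk
  · intro h2
    refine ⟨ranking_hat h2, agree h2, ?_⟩
    intro κ hκ hk F hF
    rw [hκ.1 F hF]
    refine le_iInf₂ fun u hu => ?_
    refine (iInf₂_le u hu).trans ?_
    refine iSup₂_le fun x hx => iSup₂_le fun y hy => ?_
    rw [← hk x y, hκ.1 _ (fun v hv => hv.1)]
    exact iInf₂_le u ⟨hF hu, by
      intro z hz
      rcases hz with rfl | hz
      · exact hx
      · simp only [Set.mem_singleton_iff] at hz; subst hz; exact hy⟩
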